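/- Let W^{(G)} be the Grover-type potential on V vertices: W^{(G)}_m = 0 and W^{(G)}_u = V for u ≠ m, and let H(s) = (1−s)L + s·W^{(G)} with L the complete graph Laplacian. Then the smallest eigenvalue of H(s) equals (V/2)·[1 − √(1 − 4·((V−1)/V)·s(1−s))]. -/

import Mathlib

open Matrix

/-- The smallest eigenvalue of a Hermitian matrix. -/
noncomputable def lamMin {n : ℕ} {A : Matrix (Fin n) (Fin n) ℝ}
    (hA : A.IsHermitian) : ℝ :=
  ⨅ i, hA.eigenvalues i

/-- The combinatorial Laplacian of the complete graph on `V` vertices: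
`L = V·I − J`, where `J` is the all-ones matrix. -/
def cgL (V : ℕ) : Matrix (Fin V) (Fin V) ℝ :=
  (V : ℝ) • (1 : Matrix (Fin V) (Fin V) ℝ) - Matrix.of (fun _ _ => (1 : ℝ))

set_option maxHeartbeats 1000000 in
/-- Auxiliary quadratic inequality for the ground-energy bound. -/
lemma grover_quadIneq (n s r μ : ℝ) (hn2 : 2 ≤ n) (hs0 : 0 ≤ s) (hs1 : s ≤ 1)
    (hr0 : 0 ≤ r) (hnr2 : n * r^2 = n - 4*(n-1)*(s*(1-s))) (hmu : μ = n/2*(1-r)) :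
    ∀ a T Q : ℝ, T^2 ≤ (n-1)*Q →
      μ * (a^2 + Q) ≤ (1-s)*(n*(a^2+Q) - (a+T)^2) + s*(n*(a^2+Q) - n*a^2) := by
  have hn0 : (0:ℝ) < n := by linarith
  have hμeq : μ^2 - n*μ + s*n*(1-s)*(n-1) = 0 := by
    rw [hmu]; linear_combination (n/4) * hnr2
  have hAC : ((1-s)*(n-1) - μ) * ((1-s) + s*n - μ) = (1-s)^2*(n-1) := by
    linear_combination hμeq
  have hsum : ((1-s)*(n-1) - μ) + ((1-s) + s*n - μ) = n*r := by
    rw [hmu]; ring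
  have h1 : 0 ≤ (1-s)*(n-1) - μ := by
    nlinarith [hAC, hsum, mul_nonneg hn0.le hr0, sq_nonneg (1-s), sq_nonneg ((1-s)*(n-1) - μ)]
  have h2 : 0 ≤ (1-s) + s*n - μ := by
    nlinarith [hAC, hsum, mul_nonneg hn0.le hr0, sq_nonneg (1-s), sq_nonneg ((1-s) + s*n - μ)]
  have hμn : μ ≤ n := by nlinarith [h2]
  intro a T Q hTQ
  have hQ0 : 0 ≤ Q := by nlinarith [sq_nonneg T]
  by_cases hA : (1-s)*(n-1) - μ = 0
  · have hs' : (1-s)^2 = 0 := by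
      have h := hAC; rw [hA, zero_mul] at h
      nlinarith [sq_nonneg (1-s)]
    have hs1' : s = 1 := by nlinarith [hs']
    have hμ0 : μ = 0 := by
      have h := hA; rw [hs1'] at h; linarith
    rw [hs1', hμ0]
    nlinarith [mul_nonneg hn0.le hQ0]
  · have hApos : 0 < (1-s)*(n-1) - μ := lt_of_le_of_ne h1 (Ne.symm hA)
    have hE : 0 ≤ (n-1)*((1-s)*(n-1) - μ)*a^2 - 2*(n-1)*(1-s)*a*T + ((1-s)+s*n-μ)*T^2 := by
      have hc : (0:ℝ) < (n-1)*((1-s)*(n-1) - μ) := mul_pos (by linarith) hApos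
      have key : ((n-1)*((1-s)*(n-1) - μ)) *
          ((n-1)*((1-s)*(n-1) - μ)*a^2 - 2*(n-1)*(1-s)*a*T + ((1-s)+s*n-μ)*T^2)
          = ((n-1)*((1-s)*(n-1)-μ)*a - (n-1)*(1-s)*T)^2 := by
        linear_combination ((n-1)*T^2) * hAC
      have hsq := sq_nonneg ((n-1)*((1-s)*(n-1)-μ)*a - (n-1)*(1-s)*T)
      rw [← key] at hsq
      exact nonneg_of_mul_nonneg_right hsq hc
    nlinarith [hE, mul_nonneg (by linarith : 0 ≤ n - μ) (by linarith : 0 ≤ (n-1)*Q - T^2),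
      (by linarith : (0:ℝ) < n - 1)]

/-- The quadratic form of the Grover Hamiltonian. -/
lemma grover_qform (V : ℕ) (s : ℝ) (m : Fin V) (x : Fin V → ℝ) :
    x ⬝ᵥ (((1 - s) • cgL V +
        s • Matrix.diagonal (fun u : Fin V => if u = m then (0 : ℝ) else (V : ℝ))) *ᵥ x)
      = (1-s) * ((V:ℝ) * (∑ u, (x u)^2) - (∑ u, x u)^2)
        + s * ((V:ℝ) * (∑ u, (x u)^2) - (V:ℝ) * (x m)^2) := by
  have e1 : ∀ u, (cgL V *ᵥ x) u = (V:ℝ) * x u - ∑ v, x v := by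
    intro u
    simp [cgL, Matrix.mulVec, dotProduct, Matrix.one_apply, sub_mul, ite_mul,
      Finset.sum_sub_distrib, Finset.sum_ite_eq, mul_assoc]
  have hW : ∑ u, x u * ((if u = m then (0:ℝ) else (V:ℝ)) * x u)
      = (V:ℝ) * (∑ u, (x u)^2) - (V:ℝ) * (x m)^2 := by
    have h : ∀ u : Fin V, x u * ((if u = m then (0:ℝ) else (V:ℝ)) * x u)
        = (V:ℝ) * (x u)^2 - (if u = m then (V:ℝ) * (x m)^2 else 0) := by
      intro u; by_cases h : u = m <;> (simp [h]; try ring)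
    simp_rw [h, Finset.sum_sub_distrib, Finset.sum_ite_eq' Finset.univ m, Finset.mul_sum]
    simp
  rw [Matrix.add_mulVec, dotProduct_add, Matrix.smul_mulVec,
    Matrix.smul_mulVec, dotProduct_smul, dotProduct_smul]
  simp only [dotProduct, Pi.smul_apply, smul_eq_mul]
  rw [show ∑ u, x u * (cgL V *ᵥ x) u = (V:ℝ) * (∑ u, (x u)^2) - (∑ u, x u)^2 by
    simp_rw [e1, mul_sub, Finset.sum_sub_distrib, ← Finset.sum_mul, Finset.mul_sum]
    congr 1
    · apply Finset.sum_congr rfl; intro u _; ring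
    · rw [← Finset.mul_sum, sq]]
  rw [show ∑ u, x u * ((Matrix.diagonal fun u => if u = m then (0:ℝ) else (V:ℝ)) *ᵥ x) u
      = (V:ℝ) * (∑ u, (x u)^2) - (V:ℝ) * (x m)^2 by
    simp_rw [Matrix.mulVec_diagonal]; exact hW]

/-- Cauchy–Schwarz on the complement of `m`. -/
lemma grover_CS (V : ℕ) (hV : 2 ≤ V) (m : Fin V) (x : Fin V → ℝ) :
    ((∑ u, x u) - x m)^2 ≤ ((V:ℝ) - 1) * ((∑ u, (x u)^2) - (x m)^2) := by
  have h1 : ∑ u ∈ Finset.univ.erase m, x u = (∑ u, x u) - x m :=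
    Finset.sum_erase_eq_sub (Finset.mem_univ m)
  have h2 : ∑ u ∈ Finset.univ.erase m, (x u)^2 = (∑ u, (x u)^2) - (x m)^2 :=
    Finset.sum_erase_eq_sub (Finset.mem_univ m)
  have h3 := sq_sum_le_card_mul_sum_sq (s := Finset.univ.erase m) (f := x)
  rw [h1, h2] at h3
  have hc : ((Finset.univ.erase m).card : ℝ) = (V:ℝ) - 1 := by
    rw [Finset.card_erase_of_mem (Finset.mem_univ m)]
    simp [Nat.cast_sub (by omega : 1 ≤ V)]
  rw [hc] at h3
  exact h3

/-- The explicit eigenvector equation for the ground state. -/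
lemma grover_eigvec (V : ℕ) (m : Fin V) (s μ : ℝ)
    (hμeq : μ^2 - (V:ℝ)*μ + s*(V:ℝ)*(1-s)*((V:ℝ)-1) = 0) :
    ((1 - s) • cgL V +
        s • Matrix.diagonal (fun u : Fin V => if u = m then (0 : ℝ) else (V : ℝ))) *ᵥ
      (fun u => if u = m then (1-s) + s*(V:ℝ) - μ else (1-s))
      = μ • (fun u => if u = m then (1-s) + s*(V:ℝ) - μ else (1-s)) := by
  set n : ℝ := (V:ℝ) with hn_def
  set v : Fin V → ℝ := fun u => if u = m then (1-s) + s*n - μ else (1-s) with hv_def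
  have hsv : ∑ u, v u = n*(1-s) + (s*n - μ) := by
    have h : ∀ u : Fin V, v u = (1-s) + (if u = m then s*n - μ else 0) := by
      intro u; by_cases h : u = m <;> (simp [hv_def, h]; try ring)
    simp_rw [h, Finset.sum_add_distrib, Finset.sum_ite_eq' Finset.univ m, Finset.sum_const]
    simp [mul_comm]
    exact Or.inl hn_def.symm
  have e1 : ∀ u, (cgL V *ᵥ v) u = n * v u - ∑ w, v w := by
    intro u
    simp [cgL, Matrix.mulVec, dotProduct, Matrix.one_apply, sub_mul, ite_mul,
      Finset.sum_sub_distrib, Finset.sum_ite_eq, mul_assoc]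
    exact Or.inl hn_def.symm
  funext u
  have expand : (((1 - s) • cgL V +
      s • Matrix.diagonal (fun u : Fin V => if u = m then (0 : ℝ) else n)) *ᵥ v) u
      = (1-s) * (n * v u - ∑ w, v w) + s * ((if u = m then (0:ℝ) else n) * v u) := by
    rw [Matrix.add_mulVec, Matrix.smul_mulVec, Matrix.smul_mulVec]
    simp [e1 u, Matrix.mulVec_diagonal]
  rw [expand, hsv]
  by_cases h : u = m
  · subst h
    simp only [v, eq_self_iff_true, if_true, Pi.smul_apply, smul_eq_mul]
    linear_combination hμeq
  · simp only [v, if_neg h, Pi.smul_apply, smul_eq_mul]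
    ring

/-- If a Hermitian matrix has an eigenvector, the eigenvalue occurs among
`hA.eigenvalues`. -/
lemma grover_exists_eig {V : ℕ} {A : Matrix (Fin V) (Fin V) ℝ} (hH : A.IsHermitian)
    {μ : ℝ} (v : Fin V → ℝ) (hvne : v ≠ 0) (hv : A *ᵥ v = μ • v) :
    ∃ i, hH.eigenvalues i = μ := by
  have hdet : (A - μ • 1).det = 0 := by
    rw [← Matrix.exists_mulVec_eq_zero_iff]
    refine ⟨v, hvne, ?_⟩
    rw [Matrix.sub_mulVec, hv, Matrix.smul_mulVec, Matrix.one_mulVec, sub_self]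
  have hUU : (hH.eigenvectorUnitary : Matrix (Fin V) (Fin V) ℝ) *
      star (hH.eigenvectorUnitary : Matrix (Fin V) (Fin V) ℝ) = 1 :=
    Matrix.mem_unitaryGroup_iff.mp hH.eigenvectorUnitary.2
  have hfac : A - μ • 1 = (hH.eigenvectorUnitary : Matrix (Fin V) (Fin V) ℝ) *
      (Matrix.diagonal (fun i => hH.eigenvalues i - μ)) *
      star (hH.eigenvectorUnitary : Matrix (Fin V) (Fin V) ℝ) := by
    conv_lhs => rw [hH.spectral_theorem]
    have h1 : Matrix.diagonal (fun i => hH.eigenvalues i - μ)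
        = Matrix.diagonal (RCLike.ofReal ∘ hH.eigenvalues)
          - μ • (1 : Matrix (Fin V) (Fin V) ℝ) := by
      ext i j
      rcases eq_or_ne i j with rfl | hij
      · simp [Matrix.one_apply]
      · simp [Matrix.diagonal_apply_ne _ hij, Matrix.one_apply, hij]
    rw [h1, Matrix.mul_sub, Matrix.sub_mul, Matrix.mul_smul, Matrix.smul_mul, Matrix.mul_one, hUU]
    rw [Unitary.conjStarAlgAut_apply]
  have hprod : ∏ i, (hH.eigenvalues i - μ) = 0 := by
    rw [hfac] at hdet
    rwa [Matrix.det_mul_right_comm, hUU, Matrix.one_mul, Matrix.det_diagonal] at hdet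
  obtain ⟨i, _, hi⟩ := Finset.prod_eq_zero_iff.mp hprod
  exact ⟨i, by linarith [sub_eq_zero.mp hi]⟩

/-- For the Grover potential `W^{(G)}` (`0` at `m` and `V`
elsewhere), the smallest eigenvalue of `H(s) = (1−s)L + s·W^{(G)}` is
`(V/2)·[1 − √(1 − 4((V−1)/V)·s(1−s))]`. -/
theorem grover_ground_energy {V : ℕ} (hV : 2 ≤ V) (m : Fin V) (s : ℝ)
    (hs : s ∈ Set.Icc (0 : ℝ) 1)
    (hH : ((1 - s) • cgL V +
        s • Matrix.diagonal (fun u : Fin V => if u = m then (0 : ℝ) else (V : ℝ))).IsHermitian) :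
    lamMin hH =
      ((V : ℝ) / 2) *
        (1 - Real.sqrt (1 - 4 * (((V : ℝ) - 1) / (V : ℝ)) * s * (1 - s))) := by
  obtain ⟨hs0, hs1⟩ := hs
  have hn2 : (2:ℝ) ≤ (V:ℝ) := by exact_mod_cast hV
  have hn0 : (0:ℝ) < (V:ℝ) := by linarith
  set n : ℝ := (V:ℝ) with hn_def
  set arg := 1 - 4*((n-1)/n)*s*(1-s) with harg_def
  have hargn : n * arg = n - 4*(n-1)*(s*(1-s)) := by
    rw [harg_def]; field_simp
  have harg0 : 0 ≤ arg := by
    nlinarith [mul_nonneg (by linarith : (0:ℝ) ≤ n-1)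
      (by nlinarith [sq_nonneg (2*s-1)] : (0:ℝ) ≤ 1 - 4*(s*(1-s))), hargn]
  set r := Real.sqrt arg with hr_def
  have hr2 : r^2 = arg := Real.sq_sqrt harg0
  have hr0 : 0 ≤ r := Real.sqrt_nonneg _
  have hnr2 : n * r^2 = n - 4*(n-1)*(s*(1-s)) := by rw [hr2]; exact hargn
  set μ := n/2*(1-r) with hmu_def
  show lamMin hH = μ
  have hμeq : μ^2 - n*μ + s*n*(1-s)*(n-1) = 0 := by
    rw [hmu_def]; linear_combination (n/4) * hnr2
  have hquad := grover_quadIneq n s r μ hn2 hs0 hs1 hr0 hnr2 hmu_def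
  -- lower bound for the quadratic form
  have hbound : ∀ x : Fin V → ℝ, μ * (∑ u, (x u)^2) ≤
      x ⬝ᵥ (((1 - s) • cgL V +
        s • Matrix.diagonal (fun u : Fin V => if u = m then (0 : ℝ) else (V : ℝ))) *ᵥ x) := by
    intro x
    rw [grover_qform V s m x]
    have hCS := grover_CS V hV m x
    have h := hquad (x m) ((∑ u, x u) - x m) ((∑ u, (x u)^2) - (x m)^2) hCS
    nlinarith [h]
  -- every eigenvalue is at least μ
  have hlb : ∀ i, μ ≤ hH.eigenvalues i := by
    intro i
    have hei : hH.eigenvalues i = (fun u => hH.eigenvectorBasis i u) ⬝ᵥ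
        (((1 - s) • cgL V +
          s • Matrix.diagonal (fun u : Fin V => if u = m then (0 : ℝ) else (V : ℝ))) *ᵥ
          (fun u => hH.eigenvectorBasis i u)) := by
      have h := hH.eigenvalues_eq i
      simpa using h
    have hnrm : ‖hH.eigenvectorBasis i‖ = 1 := hH.eigenvectorBasis.orthonormal.1 i
    have h2 : (inner ℝ (hH.eigenvectorBasis i) (hH.eigenvectorBasis i) : ℝ) = 1 := by
      rw [real_inner_self_eq_norm_sq, hnrm]; norm_num
    have h3 : (inner ℝ (hH.eigenvectorBasis i) (hH.eigenvectorBasis i) : ℝ)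
        = ∑ u, (hH.eigenvectorBasis i u)^2 := by
      rw [PiLp.inner_apply]
      apply Finset.sum_congr rfl
      intro u _
      simp [sq]
    have hw1 : ∑ u, (hH.eigenvectorBasis i u)^2 = 1 := h3.symm.trans h2
    have hb := hbound (fun u => hH.eigenvectorBasis i u)
    simp only [] at hb
    rw [hw1, mul_one] at hb
    rw [hei]
    exact hb
  -- μ is attained
  have hex : ∃ i, hH.eigenvalues i = μ := by
    have hμeq' : μ^2 - (V:ℝ)*μ + s*(V:ℝ)*(1-s)*((V:ℝ)-1) = 0 := hμeq
    refine grover_exists_eig hH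
      (fun u => if u = m then (1-s) + s*(V:ℝ) - μ else (1-s)) ?_ (grover_eigvec V m s μ hμeq')
    -- the vector is nonzero
    by_cases hs1' : s = 1
    · have hμhalf : μ ≤ n/2 := by
        rw [hmu_def]; nlinarith [mul_nonneg hn0.le hr0]
      intro hzero
      have h := congrFun hzero m
      simp only [eq_self_iff_true, if_true, Pi.zero_apply] at h
      rw [hs1'] at h
      have hnμ : n = μ := by rw [hn_def]; linarith [h]
      rw [hn_def] at hμhalf hn0
      linarith
    · obtain ⟨u, hu⟩ := Fintype.exists_ne_of_one_lt_card (by simp; omega) m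
      intro hzero
      have := congrFun hzero u
      simp only [if_neg hu, Pi.zero_apply] at this
      have : s = 1 := by linarith
      exact hs1' this
  obtain ⟨i0, hi0⟩ := hex
  haveI : Nonempty (Fin V) := ⟨m⟩
  unfold lamMin
  refine le_antisymm ?_ (le_ciInf hlb)
  exact ciInf_le_of_le (Finite.bddBelow_range _) i0 hi0.le
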